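/- The map f ↦ J(x^f(t), u) from X (with the uniform topology) to ℝ is continuous for each fixed t ≥ 0 and fixed u ∈ U, where x^f is the trajectory driven by f under a fixed measurable control; moreover e^{−λt}|J(x^{f₁}(t),u) − J(x^{f₂}(t),u)| ≤ L_J t e^{−(λ−L)t} ‖f₁ − f₂‖_∞. -/

import Mathlib

open MeasureTheory Set Filter Topology Real BoundedContinuousFunction

private lemma traj_int {n m : ℕ} {Us : Set (EuclideanSpace ℝ (Fin m))}
    (f : (EuclideanSpace ℝ (Fin n) × ↥Us) →ᵇ EuclideanSpace ℝ (Fin n))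
    (u : ℝ → ↥Us) (hu : Measurable u) (x₀ : EuclideanSpace ℝ (Fin n))
    (x : ℝ → EuclideanSpace ℝ (Fin n))
    (hx : ∀ t ≥ (0:ℝ), x t = x₀ + ∫ s in (0:ℝ)..t, f (x s, u s)) :
    ∀ t ≥ (0:ℝ), IntervalIntegrable (fun s => f (x s, u s)) volume 0 t := by
  set g : ℝ → EuclideanSpace ℝ (Fin n) := fun s => f (x s, u s) with hg
  -- integrable once a.e. strongly measurable
  have hInt : ∀ t : ℝ, 0 ≤ t → AEStronglyMeasurable g (volume.restrict (Ioc 0 t)) →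
      IntervalIntegrable g volume 0 t := by
    intro t ht hm
    rw [intervalIntegrable_iff_integrableOn_Ioc_of_le ht]
    refine Integrable.mono' (g := fun _ => ‖f‖)
      (integrableOn_const measure_Ioc_lt_top.ne) hm
      (ae_of_all _ fun s => f.norm_coe_le_norm _)
  -- downward closedness
  have hmono : ∀ t : ℝ, 0 ≤ t → IntervalIntegrable g volume 0 t →
      ∀ s, 0 ≤ s → s ≤ t → IntervalIntegrable g volume 0 s := by
    intro t ht h s hs hst
    exact h.mono_set (by rw [uIcc_of_le hs, uIcc_of_le ht]; exact Icc_subset_Icc le_rfl hst)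
  intro t ht
  rcases ht.eq_or_lt with h0 | htpos
  · rw [← h0]
  by_contra hPt
  set N : Set ℝ := {t : ℝ | 0 < t ∧ ¬ IntervalIntegrable g volume 0 t} with hN
  have hNne : N.Nonempty := ⟨t, htpos, hPt⟩
  have hbdd : BddBelow N := ⟨0, fun s hs => hs.1.le⟩
  set T := sInf N with hTdef
  have hT0 : 0 ≤ T := le_csInf hNne fun s hs => hs.1.le
  have hPlt : ∀ s, 0 ≤ s → s < T → IntervalIntegrable g volume 0 s := by
    intro s hs hsT
    rcases hs.eq_or_lt with h | h
    · rw [← h]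
    · by_contra hc
      exact absurd (csInf_le hbdd ⟨h, hc⟩) (not_le.2 hsT)
  have hPT : IntervalIntegrable g volume 0 T := by
    rcases hT0.eq_or_lt with h | hTpos
    · rw [← h]
    apply hInt T hT0
    have hmeas : AEStronglyMeasurable g (volume.restrict (Ioo 0 T)) := by
      have hun : Ioo 0 T = ⋃ k : ℕ, Ioc 0 (T - T / (k + 2)) := by
        ext s
        simp only [mem_Ioo, mem_iUnion, mem_Ioc]
        constructor
        · rintro ⟨hs0, hsT⟩
          obtain ⟨k, hk⟩ := exists_nat_gt (T / (T - s))
          refine ⟨k, hs0, ?_⟩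
          have h1 : T / (T - s) < (k : ℝ) + 2 := by linarith
          have h2 : T < ((k : ℝ) + 2) * (T - s) := by
            rw [div_lt_iff₀ (by linarith : (0:ℝ) < T - s)] at h1; linarith
          have h3 : T / ((k : ℝ) + 2) < T - s := by
            rw [div_lt_iff₀ (by positivity)]; linarith [h2]
          linarith
        · rintro ⟨k, hs0, hsk⟩
          have h1 : 0 < T / ((k : ℝ) + 2) := by positivity
          exact ⟨hs0, by linarith⟩
      rw [hun]
      refine AEStronglyMeasurable.iUnion fun k => ?_
      rcases le_or_gt (T - T / (k + 2)) 0 with h | h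
      · rw [Ioc_eq_empty (by simpa using h)]
        simp [aestronglyMeasurable_zero_measure]
      · exact ((intervalIntegrable_iff_integrableOn_Ioc_of_le h.le).1
          (hPlt _ h.le (by nlinarith [div_pos hTpos (by positivity : (0:ℝ) < (k:ℝ)+2)]))).aestronglyMeasurable
    rwa [← Measure.restrict_congr_set Ioo_ae_eq_Ioc]
  have hxT : ∀ s, T < s → x s = x₀ := by
    intro s hs
    have hnotint : ¬ IntervalIntegrable g volume 0 s := by
      intro h
      obtain ⟨t', ht'N, ht's⟩ := exists_lt_of_csInf_lt hNne hs
      exact ht'N.2 (hmono s (hT0.trans hs.le) h t' ht'N.1.le ht's.le)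
    rw [hx s (hT0.trans hs.le), intervalIntegral.integral_undef hnotint, add_zero]
  -- contradiction: g is integrable on [0, t] after all
  apply hPt
  have hTt : T ≤ t := csInf_le hbdd ⟨htpos, hPt⟩
  apply hInt t ht
  have hsub : Ioc 0 t ⊆ Ioc 0 T ∪ Ioi T := fun s hs => by
    rcases le_or_gt s T with h | h
    exacts [Or.inl ⟨hs.1, h⟩, Or.inr h]
  have h1 : AEStronglyMeasurable g (volume.restrict (Ioc 0 T)) :=
    ((intervalIntegrable_iff_integrableOn_Ioc_of_le hT0).1 hPT).aestronglyMeasurable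
  have h2 : AEStronglyMeasurable g (volume.restrict (Ioi T)) := by
    have hc : Measurable fun s => f (x₀, u s) :=
      f.continuous.measurable.comp (measurable_const.prodMk hu)
    refine hc.aestronglyMeasurable.congr ?_
    refine (ae_restrict_iff' measurableSet_Ioi).2 (ae_of_all _ fun s hs => ?_)
    rw [hg]
    simp only []
    rw [hxT s hs]
  exact ((aestronglyMeasurable_union_iff.2 ⟨h1, h2⟩).mono_measure
    (Measure.restrict_mono hsub le_rfl))

private lemma traj_cont {n : ℕ} (g : ℝ → EuclideanSpace ℝ (Fin n))
    (x₀ : EuclideanSpace ℝ (Fin n)) (x : ℝ → EuclideanSpace ℝ (Fin n))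
    (hx : ∀ t ≥ (0:ℝ), x t = x₀ + ∫ s in (0:ℝ)..t, g s)
    (hg : ∀ t ≥ (0:ℝ), IntervalIntegrable g volume 0 t) :
    Continuous fun s : ℝ => x (max s 0) := by
  have hcont : ContinuousOn x (Ici 0) := by
    intro t ht
    replace ht : (0:ℝ) ≤ t := ht
    have h1 : ContinuousOn (fun r => x₀ + ∫ s in (0:ℝ)..r, g s) (Icc 0 (t + 1)) := by
      refine continuousOn_const.add ?_
      have := intervalIntegral.continuousOn_primitive_interval'
        (hg (t+1) (by linarith)) (left_mem_uIcc)
      rwa [uIcc_of_le (by linarith : (0:ℝ) ≤ t + 1)] at this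
    have hmem : Icc (0:ℝ) (t + 1) ∈ 𝓝[Ici 0] t := by
      rw [← Ici_inter_Iic]
      exact inter_mem self_mem_nhdsWithin
        (mem_nhdsWithin_of_mem_nhds (Iic_mem_nhds (by linarith)))
    refine ContinuousWithinAt.congr (((h1 t ⟨ht, by linarith⟩).mono_of_mem_nhdsWithin hmem))
      (fun y hy => hx y hy) (hx t ht)
  exact hcont.comp_continuous (continuous_id.max continuous_const)
    fun s => mem_Ici.2 (le_max_right _ _)

private lemma traj_est {n m : ℕ} {Us : Set (EuclideanSpace ℝ (Fin m))}
    (L : ℝ) (hL : 0 < L)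
    (f₁ f₂ : (EuclideanSpace ℝ (Fin n) × ↥Us) →ᵇ EuclideanSpace ℝ (Fin n))
    (hlip₂ : ∀ p q : EuclideanSpace ℝ (Fin n) × ↥Us,
      ‖f₂ p - f₂ q‖ ≤ L * (‖p.1 - q.1‖ +
        ‖(p.2 : EuclideanSpace ℝ (Fin m)) - (q.2 : EuclideanSpace ℝ (Fin m))‖))
    (u : ℝ → ↥Us) (x₀ : EuclideanSpace ℝ (Fin n))
    (x₁ x₂ : ℝ → EuclideanSpace ℝ (Fin n))
    (hx₁ : ∀ t ≥ (0:ℝ), x₁ t = x₀ + ∫ s in (0:ℝ)..t, f₁ (x₁ s, u s))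
    (hx₂ : ∀ t ≥ (0:ℝ), x₂ t = x₀ + ∫ s in (0:ℝ)..t, f₂ (x₂ s, u s))
    (hg₁ : ∀ t ≥ (0:ℝ), IntervalIntegrable (fun s => f₁ (x₁ s, u s)) volume 0 t)
    (hg₂ : ∀ t ≥ (0:ℝ), IntervalIntegrable (fun s => f₂ (x₂ s, u s)) volume 0 t)
    (hc₁ : Continuous fun s : ℝ => x₁ (max s 0))
    (hc₂ : Continuous fun s : ℝ => x₂ (max s 0)) :
    ∀ t ≥ (0:ℝ), ‖x₁ t - x₂ t‖ ≤ t * Real.exp (L * t) * ‖f₁ - f₂‖ := by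
  intro b hb
  set ε := ‖f₁ - f₂‖ with hε
  have hε0 : 0 ≤ ε := norm_nonneg _
  set φ : ℝ → ℝ := fun s => ‖x₁ (max s 0) - x₂ (max s 0)‖ with hφ
  have hφcont : Continuous φ := (hc₁.sub hc₂).norm
  have hφ0 : ∀ s, 0 ≤ φ s := fun s => norm_nonneg _
  set Φ : ℝ → ℝ := fun s => ∫ r in (0:ℝ)..s, φ r with hΦ
  -- pointwise integral inequality
  have hkey : ∀ s, 0 ≤ s → φ s ≤ L * Φ s + ε * s := by
    intro s hs
    have hmax : max s 0 = s := max_eq_left hs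
    have hsub : x₁ s - x₂ s =
        ∫ r in (0:ℝ)..s, (f₁ (x₁ r, u r) - f₂ (x₂ r, u r)) := by
      rw [hx₁ s hs, hx₂ s hs, add_sub_add_left_eq_sub,
        intervalIntegral.integral_sub (hg₁ s hs) (hg₂ s hs)]
    have hptwise : ∀ r ∈ Icc (0:ℝ) s,
        ‖f₁ (x₁ r, u r) - f₂ (x₂ r, u r)‖ ≤ L * φ r + ε := by
      intro r hr
      have hmaxr : max r 0 = r := max_eq_left hr.1
      have e1 : f₁ (x₁ r, u r) - f₂ (x₂ r, u r) =
          (f₁ (x₁ r, u r) - f₂ (x₁ r, u r)) + (f₂ (x₁ r, u r) - f₂ (x₂ r, u r)) := by abel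
      rw [e1]
      refine (norm_add_le _ _).trans ?_
      have b1 : ‖f₁ (x₁ r, u r) - f₂ (x₁ r, u r)‖ ≤ ε := by
        have := BoundedContinuousFunction.norm_coe_le_norm (f₁ - f₂) (x₁ r, u r)
        simpa using this
      have b2 : ‖f₂ (x₁ r, u r) - f₂ (x₂ r, u r)‖ ≤ L * φ r := by
        have := hlip₂ (x₁ r, u r) (x₂ r, u r)
        simp only [sub_self, norm_zero, add_zero] at this
        calc ‖f₂ (x₁ r, u r) - f₂ (x₂ r, u r)‖ ≤ L * ‖x₁ r - x₂ r‖ := this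
          _ = L * φ r := by rw [hφ]; simp only [hmaxr]
      linarith
    have hnorm : ‖x₁ s - x₂ s‖ ≤ ∫ r in (0:ℝ)..s, (L * φ r + ε) := by
      rw [hsub]
      refine (intervalIntegral.norm_integral_le_integral_norm hs).trans ?_
      refine intervalIntegral.integral_mono_on hs
        (((hg₁ s hs).sub (hg₂ s hs)).norm) ?_ hptwise
      exact (((continuous_const.mul hφcont).add continuous_const).intervalIntegrable _ _)
    have hrhs : (∫ r in (0:ℝ)..s, (L * φ r + ε)) = L * Φ s + ε * s := by
      rw [intervalIntegral.integral_add (f := fun r => L * φ r) (g := fun _ => ε) (((continuous_const.mul hφcont)).intervalIntegrable _ _)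
        (intervalIntegrable_const), intervalIntegral.integral_const_mul,
        intervalIntegral.integral_const]
      simp [hΦ, smul_eq_mul, mul_comm]
    calc φ s = ‖x₁ s - x₂ s‖ := by rw [hφ]; simp only [hmax]
      _ ≤ ∫ r in (0:ℝ)..s, (L * φ r + ε) := hnorm
      _ = L * Φ s + ε * s := hrhs
  -- Gronwall on Φ
  have hΦderiv : ∀ s, HasDerivAt Φ (φ s) s := fun s =>
    (hφcont.integral_hasStrictDerivAt 0 s).hasDerivAt
  have hΦnonneg : ∀ s, 0 ≤ s → 0 ≤ Φ s := fun s hs =>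
    intervalIntegral.integral_nonneg hs fun r _ => hφ0 r
  have hGr : ∀ s ∈ Icc (0:ℝ) b, ‖Φ s‖ ≤ gronwallBound 0 L (ε * b) (s - 0) := by
    refine norm_le_gronwallBound_of_norm_deriv_right_le
      (f := Φ) (f' := φ) ?_ ?_ ?_ ?_
    · exact ((intervalIntegral.continuous_primitive
        (fun a b => hφcont.intervalIntegrable a b) 0).continuousOn)
    · exact fun s _ => (hΦderiv s).hasDerivWithinAt
    · simp [hΦ, intervalIntegral.integral_same]
    · intro s hs
      have h1 : φ s ≤ L * Φ s + ε * s := hkey s hs.1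
      have h2 : ε * s ≤ ε * b := mul_le_mul_of_nonneg_left hs.2.le hε0
      have h3 : ‖Φ s‖ = Φ s := abs_of_nonneg (hΦnonneg s hs.1)
      rw [h3, Real.norm_eq_abs, abs_of_nonneg (hφ0 s)]
      linarith
  have hΦb : Φ b ≤ ε * b / L * (Real.exp (L * b) - 1) := by
    have := hGr b ⟨hb, le_rfl⟩
    rw [Real.norm_eq_abs, abs_of_nonneg (hΦnonneg b hb), sub_zero,
      gronwallBound_of_K_ne_0 hL.ne'] at this
    linarith
  have hfin : φ b ≤ L * Φ b + ε * b := hkey b hb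
  have hmaxb : max b 0 = b := max_eq_left hb
  have heq : L * (ε * b / L * (Real.exp (L * b) - 1)) = ε * b * (Real.exp (L * b) - 1) := by
    field_simp
  have : φ b ≤ b * Real.exp (L * b) * ε := by
    have h4 : L * Φ b ≤ ε * b * (Real.exp (L * b) - 1) := by
      rw [← heq]; exact mul_le_mul_of_nonneg_left hΦb hL.le
    nlinarith [hfin]
  calc ‖x₁ b - x₂ b‖ = φ b := by rw [hφ]; simp only [hmaxb]
    _ ≤ b * Real.exp (L * b) * ε := this

/-- continuity of `f ↦ J(x^f(t), u)` in the uniform topology,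
together with the quantitative estimate
`e^{-λt}|J(x^{f₁}(t),u) - J(x^{f₂}(t),u)| ≤ L_J t e^{-(λ-L)t} ‖f₁ - f₂‖_∞`. -/
theorem stmt2 {n m : ℕ} (L C L_J lam : ℝ) (hL : 0 < L) (hlam : L < lam) (hLJ : 0 < L_J)
    (Us : Set (EuclideanSpace ℝ (Fin m))) (hUcpt : IsCompact Us)
    (X : Set ((EuclideanSpace ℝ (Fin n) × ↥Us) →ᵇ EuclideanSpace ℝ (Fin n)))
    (hbound : ∀ f ∈ X, ∀ p, ‖f p‖ ≤ C)
    (hlip : ∀ f ∈ X, ∀ p q : EuclideanSpace ℝ (Fin n) × ↥Us,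
      ‖f p - f q‖ ≤ L * (‖p.1 - q.1‖ +
        ‖(p.2 : EuclideanSpace ℝ (Fin m)) - (q.2 : EuclideanSpace ℝ (Fin m))‖))
    (J : EuclideanSpace ℝ (Fin n) → EuclideanSpace ℝ (Fin m) → ℝ)
    (hJcont : Continuous fun p : EuclideanSpace ℝ (Fin n) × EuclideanSpace ℝ (Fin m) =>
      J p.1 p.2)
    (hJLip : ∀ v ∈ Us, LipschitzWith (Real.toNNReal L_J) fun x => J x v)
    (u : ℝ → ↥Us) (hu_meas : Measurable u) (x₀ : EuclideanSpace ℝ (Fin n))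
    (traj : ((EuclideanSpace ℝ (Fin n) × ↥Us) →ᵇ EuclideanSpace ℝ (Fin n)) →
      ℝ → EuclideanSpace ℝ (Fin n))
    (htraj : ∀ f ∈ X, ∀ t ≥ (0:ℝ), traj f t = x₀ + ∫ s in (0:ℝ)..t, f (traj f s, u s)) :
    (∀ t ≥ (0:ℝ), ∀ v ∈ Us, ContinuousOn (fun f => J (traj f t) v) X) ∧
    (∀ t ≥ (0:ℝ), ∀ v ∈ Us, ∀ f₁ ∈ X, ∀ f₂ ∈ X,
      Real.exp (-lam * t) * |J (traj f₁ t) v - J (traj f₂ t) v| ≤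
        L_J * t * Real.exp (-(lam - L) * t) * ‖f₁ - f₂‖) := by
  -- master trajectory estimate
  have key : ∀ t ≥ (0:ℝ), ∀ f₁ ∈ X, ∀ f₂ ∈ X,
      ‖traj f₁ t - traj f₂ t‖ ≤ t * Real.exp (L * t) * ‖f₁ - f₂‖ := by
    intro t ht f₁ hf₁ f₂ hf₂
    have hg₁ := traj_int f₁ u hu_meas x₀ (traj f₁) (htraj f₁ hf₁)
    have hg₂ := traj_int f₂ u hu_meas x₀ (traj f₂) (htraj f₂ hf₂)
    exact traj_est L hL f₁ f₂ (hlip f₂ hf₂) u x₀ (traj f₁) (traj f₂)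
      (htraj f₁ hf₁) (htraj f₂ hf₂) hg₁ hg₂
      (traj_cont _ x₀ (traj f₁) (htraj f₁ hf₁) hg₁)
      (traj_cont _ x₀ (traj f₂) (htraj f₂ hf₂) hg₂) t ht
  have keyJ : ∀ t ≥ (0:ℝ), ∀ v ∈ Us, ∀ f₁ ∈ X, ∀ f₂ ∈ X,
      |J (traj f₁ t) v - J (traj f₂ t) v| ≤
        L_J * (t * Real.exp (L * t)) * ‖f₁ - f₂‖ := by
    intro t ht v hv f₁ hf₁ f₂ hf₂
    have h1 := (hJLip v hv).dist_le_mul (traj f₁ t) (traj f₂ t)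
    rw [Real.dist_eq, dist_eq_norm, Real.coe_toNNReal L_J hLJ.le] at h1
    calc |J (traj f₁ t) v - J (traj f₂ t) v| ≤ L_J * ‖traj f₁ t - traj f₂ t‖ := h1
      _ ≤ L_J * (t * Real.exp (L * t) * ‖f₁ - f₂‖) :=
        mul_le_mul_of_nonneg_left (key t ht f₁ hf₁ f₂ hf₂) hLJ.le
      _ = L_J * (t * Real.exp (L * t)) * ‖f₁ - f₂‖ := by ring
  constructor
  · intro t ht v hv
    refine LipschitzOnWith.continuousOn
      (K := Real.toNNReal (L_J * (t * Real.exp (L * t)))) ?_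
    refine LipschitzOnWith.of_dist_le_mul fun f₁ hf₁ f₂ hf₂ => ?_
    rw [Real.dist_eq, dist_eq_norm, Real.coe_toNNReal _ (by positivity)]
    exact keyJ t ht v hv f₁ hf₁ f₂ hf₂
  · intro t ht v hv f₁ hf₁ f₂ hf₂
    have hexp : Real.exp (-lam * t) * Real.exp (L * t) = Real.exp (-(lam - L) * t) := by
      rw [← Real.exp_add]; ring_nf
    calc Real.exp (-lam * t) * |J (traj f₁ t) v - J (traj f₂ t) v|
        ≤ Real.exp (-lam * t) * (L_J * (t * Real.exp (L * t)) * ‖f₁ - f₂‖) :=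
          mul_le_mul_of_nonneg_left (keyJ t ht v hv f₁ hf₁ f₂ hf₂) (Real.exp_pos _).le
      _ = L_J * t * (Real.exp (-lam * t) * Real.exp (L * t)) * ‖f₁ - f₂‖ := by ring
      _ = L_J * t * Real.exp (-(lam - L) * t) * ‖f₁ - f₂‖ := by rw [hexp]
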